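/- Let H be a finite-dimensional complex vector space, let σ : H → H be a conjugate-linear involution (σ(λx) = conj(λ)·σ(x) and σ∘σ = id), and let B : H × H → ℂ be a nondegenerate alternating ℂ-bilinear form. Let V ⊆ H be a complex subspace such that the annihilator {x ∈ H : B(v, x) = 0 for all v ∈ V} equals V, and such that for every nonzero v ∈ V the complex number i·B(v, σ(v)) is a positive real number. Then V ∩ σ(V) = 0 and V + σ(V) = H; equivalently, the map V × V → H sending (u, v) to u + σ(v) is bijective. -/

import Mathlib

instance : RingHomSurjective (starRingEnd ℂ) :=
  ⟨fun z => ⟨star z, by rw [starRingEnd_apply, star_star]⟩⟩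

/-- Let `H` be a finite-dimensional complex vector space, `σ` a conjugate-linear
involution of `H`, and `B` a nondegenerate alternating bilinear form on `H`.
If `V ⊆ H` is a subspace which is its own annihilator for `B` and such that
`i·B(v, σv) > 0` for every nonzero `v ∈ V`, then `V ∩ σ(V) = 0` and `V + σ(V) = H`. -/
theorem inf_conj_eq_bot_and_sup_conj_eq_top_of_positivity
    (H : Type*) [AddCommGroup H] [Module ℂ H] [FiniteDimensional ℂ H]
    (σ : H →ₛₗ[starRingEnd ℂ] H) (hσ : ∀ x : H, σ (σ x) = x)
    (B : H →ₗ[ℂ] H →ₗ[ℂ] ℂ)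
    (halt : ∀ x : H, B x x = 0)
    (hnd : ∀ x : H, (∀ y : H, B x y = 0) → x = 0)
    (V : Submodule ℂ H)
    (hann : ∀ x : H, (∀ v ∈ V, B v x = 0) ↔ x ∈ V)
    (hpos : ∀ v ∈ V, v ≠ (0 : H) → ∃ r : ℝ, 0 < r ∧ Complex.I * B v (σ v) = (r : ℂ)) :
    V ⊓ Submodule.map σ V = ⊥ ∧ V ⊔ Submodule.map σ V = ⊤ := by
  classical
  -- the semilinear equivalence given by σ
  let e : H ≃ₛₗ[starRingEnd ℂ] H :=
    { toFun := σ, map_add' := σ.map_add, map_smul' := σ.map_smulₛₗ,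
      invFun := σ, left_inv := hσ, right_inv := hσ }
  -- V ⊓ σ(V) = ⊥
  have hinf : V ⊓ Submodule.map σ V = ⊥ := by
    rw [Submodule.eq_bot_iff]
    rintro x ⟨hxV, v, hv, rfl⟩
    by_contra hne
    have hσv : σ (σ v) ∈ V := by rw [hσ]; exact hv
    have hB : B (σ v) (σ (σ v)) = 0 := ((hann (σ (σ v))).mpr hσv) (σ v) hxV
    obtain ⟨r, hr, hIr⟩ := hpos (σ v) hxV hne
    rw [hB, mul_zero] at hIr
    exact hr.ne' (by exact_mod_cast hIr.symm)
  refine ⟨hinf, ?_⟩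
  -- finrank of σ(V) equals finrank of V
  have hmapV : Submodule.map e.toLinearMap V = Submodule.map σ V := rfl
  have hfr : Module.finrank ℂ (Submodule.map σ V) = Module.finrank ℂ V := by
    have := rank_eq_of_equiv_equiv (M := V) (M₁ := Submodule.map σ V)
      ((starRingEnd ℂ) : ZeroHom ℂ ℂ)
      ((e.submoduleMap V).toAddEquiv)
      ⟨(starRingEnd ℂ).injective, fun z => ⟨star z, star_star z⟩⟩
      (fun r m => Subtype.ext (σ.map_smulₛₗ r m.1))
    simp only [Module.finrank, this]
  -- B is reflexive and nondegenerate, and V is its own orthogonal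
  have hrefl : B.IsRefl := LinearMap.IsAlt.isRefl halt
  have hndB : LinearMap.BilinForm.Nondegenerate B :=
    (LinearMap.IsRefl.nondegenerate_iff_separatingLeft hrefl).mpr hnd
  have horth : LinearMap.BilinForm.orthogonal B V = V := by
    ext x
    rw [LinearMap.BilinForm.mem_orthogonal_iff, ← hann x]
  have hdim : Module.finrank ℂ V + Module.finrank ℂ V = Module.finrank ℂ H := by
    have h := LinearMap.BilinForm.finrank_orthogonal hndB V
    rw [horth] at h
    have hle : Module.finrank ℂ V ≤ Module.finrank ℂ H := Submodule.finrank_le V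
    omega
  -- dimension count
  apply Submodule.eq_top_of_finrank_eq
  have h2 := Submodule.finrank_sup_add_finrank_inf_eq V (Submodule.map σ V)
  rw [hinf, hfr] at h2
  simp only [finrank_bot, add_zero] at h2
  omega
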